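/- Let A ⊆ ℝ^d be 1-relatively dense, let Q ⊆ ℝ^d be a finite symmetric set (Q = -Q) with 0 ∈ Q, and let F ⊆ ℝ^d be finite with |F| = h such that A ∩ [-N,N]^d ⊆ F + 2Q. If Q ⊆ [-4N, 4N]^d and F ⊆ [-9N, 9N]^d, then the set 2Q + (-2,2)^d has Lebesgue measure at least (2N)^d / h. -/

import Mathlib

open Pointwise MeasureTheory

lemma vol_add_closedBall_le (d : ℕ) (S : Set (Fin d → ℝ)) (hS : S.Countable) :
    volume (S + Metric.closedBall 0 2) ≤ volume (S + Metric.ball 0 2) := by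
  have h1 : S + Metric.closedBall (0 : Fin d → ℝ) 2
      ⊆ (S + Metric.ball 0 2) ∪ ⋃ q ∈ S, (Metric.closedBall q 2 \ Metric.ball q 2) := by
    rintro x ⟨q, hq, y, hy, rfl⟩
    by_cases hxy : q + y ∈ S + Metric.ball (0:Fin d → ℝ) 2
    · exact Or.inl hxy
    · refine Or.inr (Set.mem_biUnion hq ⟨?_, ?_⟩)
      · simpa [dist_eq_norm, add_sub_cancel_left] using hy
      · intro hmem
        exact hxy ⟨q, hq, q + y - q, by simpa [dist_eq_norm] using hmem, by abel⟩
  have hnull : volume (⋃ q ∈ S, (Metric.closedBall q 2 \ Metric.ball q 2)) = 0 := by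
    refine (measure_biUnion_null_iff hS).2 fun q _ => ?_
    rw [measure_diff Metric.ball_subset_closedBall measurableSet_ball.nullMeasurableSet
      (measure_ball_lt_top (μ := volume)).ne]
    simp
  calc volume (S + Metric.closedBall 0 2)
      ≤ volume ((S + Metric.ball 0 2) ∪ ⋃ q ∈ S, (Metric.closedBall q 2 \ Metric.ball q 2)) :=
        measure_mono h1
    _ ≤ volume (S + Metric.ball 0 2) + volume (⋃ q ∈ S, (Metric.closedBall q 2 \ Metric.ball q 2)) := measure_union_le _ _
    _ = volume (S + Metric.ball 0 2) := by rw [hnull, add_zero]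

lemma vol_finset_add_le (d : ℕ) (F : Finset (Fin d → ℝ)) (S : Set (Fin d → ℝ)) :
    volume ((F : Set (Fin d → ℝ)) + S) ≤ F.card * volume S := by
  rw [← Set.iUnion_add_left_image]
  calc volume (⋃ f ∈ (F : Set (Fin d → ℝ)), f +ᵥ S)
      ≤ ∑ f ∈ F, volume (f +ᵥ S) := by
        simpa using measure_biUnion_finset_le (μ := volume) F (fun f => f +ᵥ S)
    _ = ∑ f ∈ F, volume S := by
        refine Finset.sum_congr rfl fun f _ => ?_
        exact MeasureTheory.measure_vadd volume f S
    _ = F.card * volume S := by simp [mul_comm]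

/-- Volume lower bound in the covering argument: if `A ⊆ ℝ^d` is `1`-relatively
dense, `Q` is finite symmetric with `0 ∈ Q`, `|F| = h`, and
`A ∩ [-N,N]^d ⊆ F + 2Q` with `Q ⊆ [-4N,4N]^d`, `F ⊆ [-9N,9N]^d`, then
`λ(2Q + (-2,2)^d) ≥ (2N)^d / h`. -/
theorem volume_lower_bound_for_sumset (d : ℕ) (A Q F : Set (Fin d → ℝ))
    (N : ℝ) (hN : 0 < N) (h : ℕ)
    (hdense : ∀ x : Fin d → ℝ, ∃ a ∈ A, dist x a ≤ 1)
    (hQfin : Q.Finite) (hQsymm : Q = -Q) (hQ0 : (0 : Fin d → ℝ) ∈ Q)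
    (hFfin : F.Finite) (hFcard : F.ncard = h)
    (hsub : A ∩ Metric.closedBall 0 N ⊆ F + (Q + Q))
    (hQb : Q ⊆ Metric.closedBall 0 (4 * N))
    (hFb : F ⊆ Metric.closedBall 0 (9 * N)) :
    ENNReal.ofReal ((2 * N) ^ d / h) ≤ volume (Q + Q + Metric.ball 0 2) := by
  classical
  rcases Nat.eq_zero_or_pos h with h0 | hpos
  · simp [h0]
  have hh : (0:ℝ) < h := by exact_mod_cast hpos
  rcases le_or_gt N 1 with hN1 | hN1
  · -- small N : use the single ball at 0
    have hsubset : Metric.ball (0 : Fin d → ℝ) 2 ⊆ Q + Q + Metric.ball 0 2 := by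
      intro x hx
      exact ⟨0 + 0, ⟨0, hQ0, 0, hQ0, by simp⟩, x, hx, by simp⟩
    calc ENNReal.ofReal ((2 * N) ^ d / h)
        ≤ ENNReal.ofReal ((2 * 2) ^ d) := by
          apply ENNReal.ofReal_le_ofReal
          apply (div_le_self (by positivity) (by exact_mod_cast hpos)).trans
          exact pow_le_pow_left₀ (by positivity) (by linarith) d
      _ = volume (Metric.ball (0 : Fin d → ℝ) 2) := by
          rw [Real.volume_pi_ball _ (by norm_num : (0:ℝ) < 2)]
          simp
      _ ≤ volume (Q + Q + Metric.ball 0 2) := measure_mono hsubset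
  · -- main case N > 1
    have hNcover : Metric.closedBall (0 : Fin d → ℝ) N
        ⊆ F + (Q + Q) + Metric.closedBall 0 2 := by
      intro x hx
      have hxN : ‖x‖ ≤ N := by simpa [dist_eq_norm] using hx
      set y : Fin d → ℝ := (1 - 1/N) • x with hy
      have h01 : 0 ≤ 1 - 1/N := by
        have : 1/N ≤ 1 := by rw [div_le_one hN]; linarith
        linarith
      have hyN : ‖y‖ ≤ N - 1 := by
        rw [hy, norm_smul, Real.norm_of_nonneg h01]
        calc (1 - 1/N) * ‖x‖ ≤ (1 - 1/N) * N := by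
              apply mul_le_mul_of_nonneg_left hxN h01
          _ = N - 1 := by field_simp
      have hxy : dist x y ≤ 1 := by
        rw [dist_eq_norm, hy]
        have : x - (1 - 1/N) • x = (1/N) • x := by
          rw [sub_smul, one_smul]; abel
        rw [this, norm_smul, Real.norm_of_nonneg (by positivity)]
        rw [div_mul_eq_mul_div, one_mul, div_le_one hN]
        exact hxN
      obtain ⟨a, haA, hya⟩ := hdense y
      have haN : a ∈ Metric.closedBall (0 : Fin d → ℝ) N := by
        rw [Metric.mem_closedBall, dist_comm]
        calc dist (0:Fin d → ℝ) a ≤ dist (0:Fin d → ℝ) y + dist y a := dist_triangle _ _ _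
          _ ≤ (N - 1) + 1 := by
              refine add_le_add ?_ hya
              rw [dist_comm]; simpa [dist_eq_norm] using hyN
          _ = N := by ring
      obtain ⟨f, hf, s, hs, hfs⟩ := hsub ⟨haA, haN⟩
      have hfs' : f + s = a := hfs
      refine ⟨f + s, ⟨f, hf, s, hs, rfl⟩, x - a, ?_,
        show f + s + (x - a) = x by rw [hfs']; abel⟩
      rw [Metric.mem_closedBall, dist_eq_norm, sub_zero, ← dist_eq_norm]
      calc dist x a ≤ dist x y + dist y a := dist_triangle _ _ _
        _ ≤ 1 + 1 := add_le_add hxy hya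
        _ = 2 := by norm_num
    set S := Q + Q + Metric.closedBall (0 : Fin d → ℝ) 2 with hS
    have key : ENNReal.ofReal ((2 * N) ^ d) ≤ h * volume (Q + Q + Metric.ball 0 2) := by
      calc ENNReal.ofReal ((2 * N) ^ d)
          = volume (Metric.closedBall (0 : Fin d → ℝ) N) := by
            rw [Real.volume_pi_closedBall _ hN.le]; simp
        _ ≤ volume (F + (Q + Q) + Metric.closedBall 0 2) := measure_mono hNcover
        _ = volume ((hFfin.toFinset : Set (Fin d → ℝ)) + S) := by
            rw [hS, add_assoc, hFfin.coe_toFinset]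
        _ ≤ hFfin.toFinset.card * volume S := vol_finset_add_le d _ _
        _ ≤ h * volume (Q + Q + Metric.ball 0 2) := by
            have hcard : hFfin.toFinset.card = h := by
              rw [← hFcard, Set.ncard_eq_toFinset_card F hFfin]
            rw [hcard]
            exact mul_le_mul_right (vol_add_closedBall_le d _
              ((hQfin.add hQfin).countable)) _
    rw [ENNReal.ofReal_div_of_pos hh, ENNReal.ofReal_natCast]
    rw [ENNReal.div_le_iff (by exact_mod_cast hpos.ne') (by simp)]
    calc ENNReal.ofReal ((2 * N) ^ d) ≤ h * volume (Q + Q + Metric.ball 0 2) := key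
      _ = volume (Q + Q + Metric.ball 0 2) * h := mul_comm _ _
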